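/- (Yang–Yang bounds imply small-mass asymptotics) Suppose ε: ℝ → ℝ satisfies λ²/(2m) - h ≥ ε(λ) ≥ λ²/(2m) + x₀, where x₀ solves x₀ = -h - (T/(2π))∫_ℝ K(0,μ) ln(1 + e^{-(μ²/(2m)+x₀)/T}) dμ with K(0,μ) = 2c/(μ²+c²). Then x₀ = -h + O(√m) as m → 0 with c fixed, and hence ε(λ) = λ²/(2m) - h + O(√m). -/

import Mathlib

open MeasureTheory Real

lemma yy_log_le_exp (x : ℝ) : Real.log (1 + Real.exp x) ≤ Real.exp x := by
  have h := Real.log_le_sub_one_of_pos (show (0:ℝ) < 1 + Real.exp x by positivity)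
  linarith

lemma yy_log_le_max (x : ℝ) : Real.log (1 + Real.exp x) ≤ Real.log 2 + max x 0 := by
  have h2 : (1:ℝ) + Real.exp x ≤ 2 * Real.exp (max x 0) := by
    rcases le_or_gt x 0 with hx | hx
    · have h1 : Real.exp x ≤ 1 := Real.exp_le_one_iff.mpr hx
      have h0 : Real.exp (max x 0) = 1 := by rw [max_eq_right hx, Real.exp_zero]
      rw [h0]; linarith
    · have h0 : Real.exp (max x 0) = Real.exp x := by rw [max_eq_left hx.le]
      have h1 : 1 ≤ Real.exp x := Real.one_le_exp hx.le
      rw [h0]; linarith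
  calc Real.log (1 + Real.exp x) ≤ Real.log (2 * Real.exp (max x 0)) := by
        apply Real.log_le_log (by positivity) h2
    _ = Real.log 2 + max x 0 := by
        rw [Real.log_mul (by norm_num) (Real.exp_ne_zero _), Real.log_exp]

lemma yy_kernel_integrable {c : ℝ} (hc : 0 < c) :
    Integrable (fun μ : ℝ => 2 * c / (μ ^ 2 + c ^ 2)) := by
  have h : (fun μ : ℝ => 2 * c / (μ ^ 2 + c ^ 2))
      = fun μ : ℝ => (2 / c) * (1 + (c⁻¹ * μ) ^ 2)⁻¹ := by
    funext μ
    have hc2 : c^2 ≠ 0 := by positivity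
    field_simp
    ring
  rw [h]
  exact ((integrable_inv_one_add_sq.comp_mul_left' (inv_ne_zero hc.ne')).const_mul _)

lemma yy_kernel_integral {c : ℝ} (hc : 0 < c) :
    ∫ μ : ℝ, 2 * c / (μ ^ 2 + c ^ 2) = 2 * π := by
  have h : (fun μ : ℝ => 2 * c / (μ ^ 2 + c ^ 2))
      = fun μ : ℝ => (2 / c) * (1 + (c⁻¹ * μ) ^ 2)⁻¹ := by
    funext μ
    have hc2 : c^2 ≠ 0 := by positivity
    field_simp
    ring
  rw [h, MeasureTheory.integral_const_mul, MeasureTheory.Measure.integral_comp_mul_left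
    (fun x : ℝ => (1 + x ^ 2)⁻¹) c⁻¹, integral_univ_inv_one_add_sq]
  rw [inv_inv, abs_of_pos hc, smul_eq_mul]
  field_simp

noncomputable def yyB (h T : ℝ) : ℝ := (3/2) * (T * Real.log 2 + h)
noncomputable def yyM (h T : ℝ) : ℝ := (1 + yyB h T / T) * Real.exp (yyB h T / T)
noncomputable def yyC (c h T : ℝ) : ℝ := (T/(2*π)) * ((2/c) * yyM h T * Real.sqrt (4*T*π))
noncomputable def yyM0 (c h T : ℝ) : ℝ := c^2 / (272*π*(T*Real.log 2 + h))

set_option maxHeartbeats 1000000 in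
lemma yy_main (c h T : ℝ) (hc : 0 < c) (hh : 0 < h) (hT : 0 < T)
    (m : ℝ) (hm : 0 < m) (hm0 : m ≤ yyM0 c h T) (x₀ : ℝ)
    (heq : x₀ = -h - (T / (2 * π)) * ∫ μ : ℝ, (2 * c / (μ ^ 2 + c ^ 2)) *
        Real.log (1 + Real.exp (-(μ ^ 2 / (2 * m) + x₀) / T))) :
    x₀ + h ≤ 0 ∧ -(x₀ + h) ≤ yyC c h T * Real.sqrt m := by
  have hπ : (0:ℝ) < π := Real.pi_pos
  have hlog2 : (0:ℝ) < Real.log 2 := Real.log_pos (by norm_num)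
  set k : ℝ → ℝ := fun μ => 2 * c / (μ ^ 2 + c ^ 2) with hk_def
  set f : ℝ → ℝ := fun μ =>
    k μ * Real.log (1 + Real.exp (-(μ ^ 2 / (2 * m) + x₀) / T)) with hf_def
  have hk_pos : ∀ μ : ℝ, 0 < k μ := fun μ => by positivity
  have hk_le : ∀ μ : ℝ, k μ ≤ 2 / c := by
    intro μ
    have h1 : 2 * c / (μ ^ 2 + c ^ 2) ≤ 2 * c / c ^ 2 :=
      div_le_div_of_nonneg_left (by positivity) (by positivity) (by nlinarith [sq_nonneg μ])
    have h2 : 2 * c / c ^ 2 = 2 / c := by field_simp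
    rw [hk_def]; simp only []; linarith [h1, h2 ▸ h1]
  have hf_nonneg : ∀ μ : ℝ, 0 ≤ f μ := by
    intro μ
    have hL : 0 ≤ Real.log (1 + Real.exp (-(μ ^ 2 / (2 * m) + x₀) / T)) :=
      Real.log_nonneg (by nlinarith [Real.exp_pos (-(μ ^ 2 / (2 * m) + x₀) / T)])
    exact mul_nonneg (hk_pos μ).le hL
  have hI_nonneg : 0 ≤ ∫ μ : ℝ, f μ := integral_nonneg hf_nonneg
  have hy_eq : x₀ + h = -((T / (2 * π)) * ∫ μ : ℝ, f μ) := by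
    rw [heq]; ring_nf
  have hx0h_nonpos : x₀ + h ≤ 0 := by
    rw [hy_eq]
    have : 0 ≤ (T / (2 * π)) * ∫ μ : ℝ, f μ := by positivity
    linarith
  refine ⟨hx0h_nonpos, ?_⟩
  set S : ℝ := -x₀ with hS_def
  have hS_pos : 0 < S := by simp only [hS_def]; linarith
  set R : ℝ := Real.sqrt (2 * m * S) with hR_def
  have hR_pos : 0 < R := Real.sqrt_pos.mpr (by positivity)
  have hR_sq : R ^ 2 = 2 * m * S := Real.sq_sqrt (by positivity)
  -- pointwise facts about the exponent
  have hexp_eq : ∀ μ : ℝ, -(μ ^ 2 / (2 * m) + x₀) / T = (S - μ ^ 2 / (2 * m)) / T := by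
    intro μ; rw [hS_def]; ring
  have hmax_le : ∀ μ : ℝ, max (-(μ ^ 2 / (2 * m) + x₀) / T) 0 ≤ S / T := by
    intro μ
    apply max_le _ (by positivity)
    rw [hexp_eq]
    have h1 : (0:ℝ) ≤ μ ^ 2 / (2 * m) := by positivity
    gcongr
    linarith
  have hA : (0:ℝ) < T * Real.log 2 + h := by positivity
  have hki : Integrable k := yy_kernel_integrable hc
  have hIk : ∫ μ : ℝ, k μ = 2 * π := yy_kernel_integral hc
  have hout : ∀ μ : ℝ, μ ∉ Set.Icc (-R) R → -(μ ^ 2 / (2 * m) + x₀) / T ≤ 0 := by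
    intro μ hμ
    have hμ2 : R ^ 2 < μ ^ 2 := by
      simp only [Set.mem_Icc, not_and_or, not_le] at hμ
      rcases hμ with h1 | h1 <;> nlinarith
    rw [hexp_eq]
    have hnum : S - μ ^ 2 / (2 * m) ≤ 0 := by
      rw [hR_sq] at hμ2
      rw [sub_nonpos, le_div_iff₀ (by positivity)]
      nlinarith
    exact div_nonpos_iff.mpr (Or.inr ⟨hnum, hT.le⟩)
  have hL_out : ∀ μ : ℝ, μ ∉ Set.Icc (-R) R →
      Real.log (1 + Real.exp (-(μ ^ 2 / (2 * m) + x₀) / T)) ≤ Real.log 2 := by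
    intro μ hμ
    have h1 := yy_log_le_max (-(μ ^ 2 / (2 * m) + x₀) / T)
    have h2 : max (-(μ ^ 2 / (2 * m) + x₀) / T) 0 = 0 := max_eq_right (hout μ hμ)
    rw [h2] at h1; linarith
  -- Main a priori bound : S ≤ yyB h T
  have hSB : S ≤ yyB h T := by
    rcases le_or_gt R (c / 2) with hcase | hcase
    · -- Case A : R small
      set gA : ℝ → ℝ := fun μ =>
        k μ * Real.log 2 + (S / T) * Set.indicator (Set.Icc (-R) R) k μ with hgA_def
      have hind_int : Integrable (Set.indicator (Set.Icc (-R) R) k) :=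
        (hki.integrableOn).integrable_indicator measurableSet_Icc
      have hgA_int : Integrable gA := (hki.mul_const _).add (hind_int.const_mul _)
      have hfgA : ∀ μ : ℝ, f μ ≤ gA μ := by
        intro μ
        by_cases hμ : μ ∈ Set.Icc (-R) R
        · have h1 := yy_log_le_max (-(μ ^ 2 / (2 * m) + x₀) / T)
          have h2 : Real.log (1 + Real.exp (-(μ ^ 2 / (2 * m) + x₀) / T))
              ≤ Real.log 2 + S / T := le_trans h1 (by linarith [hmax_le μ])
          have h3 := mul_le_mul_of_nonneg_left h2 (hk_pos μ).le
          simp only [hgA_def, hf_def, Set.indicator_of_mem hμ]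
          nlinarith [h3]
        · have h2 := hL_out μ hμ
          have h3 := mul_le_mul_of_nonneg_left h2 (hk_pos μ).le
          simp only [hgA_def, hf_def, Set.indicator_of_notMem hμ, mul_zero, add_zero]
          linarith
      have hIfA : ∫ μ : ℝ, f μ ≤ ∫ μ : ℝ, gA μ :=
        integral_mono_of_nonneg (Filter.Eventually.of_forall hf_nonneg) hgA_int
          (Filter.Eventually.of_forall hfgA)
      have hIgA : ∫ μ : ℝ, gA μ
          = 2 * π * Real.log 2 + (S / T) * ∫ μ in Set.Icc (-R) R, k μ := by
        rw [hgA_def, integral_add (hki.mul_const _) (hind_int.const_mul _),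
          integral_mul_const, hIk, MeasureTheory.integral_const_mul,
          integral_indicator measurableSet_Icc]
      have hIcc_le : ∫ μ in Set.Icc (-R) R, k μ ≤ 2 := by
        have h1 : ∫ μ in Set.Icc (-R) R, k μ ≤ ∫ μ in Set.Icc (-R) R, (2 / c : ℝ) := by
          apply setIntegral_mono_on (hki.integrableOn)
            (integrableOn_const measure_Icc_lt_top.ne) measurableSet_Icc
            (fun x _ => hk_le x)
        have h2 : ∫ μ in Set.Icc (-R) R, (2 / c : ℝ) = (R - (-R)) * (2 / c) := by
          rw [setIntegral_const, Real.volume_real_Icc_of_le (by linarith),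
            smul_eq_mul]
        have h3 : (R - (-R)) * (2 / c) ≤ 2 := by
          have h4 : (R - (-R)) * (2 / c) = 4 * R / c := by ring
          rw [h4, div_le_iff₀ hc]; linarith
        linarith
      have hy_le : -(x₀ + h) ≤ T * Real.log 2 + S / π := by
        have h4 : ∫ μ : ℝ, f μ ≤ 2 * π * Real.log 2 + (S / T) * 2 := by
          rw [hIgA] at hIfA
          have h5 := mul_le_mul_of_nonneg_left hIcc_le (le_of_lt (div_pos hS_pos hT))
          linarith
        have h5 : -(x₀ + h) = (T / (2 * π)) * ∫ μ : ℝ, f μ := by rw [hy_eq]; ring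
        rw [h5]
        calc (T / (2 * π)) * ∫ μ : ℝ, f μ
            ≤ (T / (2 * π)) * (2 * π * Real.log 2 + (S / T) * 2) :=
              mul_le_mul_of_nonneg_left h4 (by positivity)
          _ = T * Real.log 2 + S / π := by field_simp
      have hSpi : S / π ≤ S / 3 := by
        gcongr
        exact Real.pi_gt_three.le
      have hSy : S = h + (-(x₀ + h)) := by rw [hS_def]; ring
      rw [yyB]; linarith
    · -- Case B : R large, contradiction with smallness of m
      exfalso
      have hk_cont : Continuous k := by
        apply continuous_const.div ((continuous_pow 2).add continuous_const)
        intro μ; exact (by positivity : μ ^ 2 + c ^ 2 ≠ 0)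
      set q : ℝ → ℝ := fun μ => k μ * (μ ^ 2 / (2 * m)) with hq_def
      have hq_cont : Continuous q := hk_cont.mul ((continuous_pow 2).div_const _)
      have hq_nonneg : ∀ μ : ℝ, 0 ≤ q μ := by
        intro μ; exact mul_nonneg (hk_pos μ).le (by positivity)
      have hq_intOn : IntegrableOn q (Set.Icc (-R) R) := hq_cont.integrableOn_Icc
      have hind2 : Integrable (Set.indicator (Set.Icc (-R) R) q) :=
        hq_intOn.integrable_indicator measurableSet_Icc
      set gB : ℝ → ℝ := fun μ =>
        k μ * Real.log 2 + (S / T) * k μ - (1 / T) * Set.indicator (Set.Icc (-R) R) q μ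
        with hgB_def
      have hgB_int : Integrable gB :=
        ((hki.mul_const _).add (hki.const_mul _)).sub (hind2.const_mul _)
      have hfgB : ∀ μ : ℝ, f μ ≤ gB μ := by
        intro μ
        by_cases hμ : μ ∈ Set.Icc (-R) R
        · have hμ2 : μ ^ 2 ≤ R ^ 2 := by
            rcases Set.mem_Icc.mp hμ with ⟨ha, hb⟩; nlinarith
          have huS : μ ^ 2 / (2 * m) ≤ S := by
            rw [hR_sq] at hμ2
            rw [div_le_iff₀ (by positivity)]; nlinarith
          have h1 := yy_log_le_max (-(μ ^ 2 / (2 * m) + x₀) / T)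
          have h2 : max (-(μ ^ 2 / (2 * m) + x₀) / T) 0 = (S - μ ^ 2 / (2 * m)) / T := by
            rw [hexp_eq]
            exact max_eq_left (div_nonneg (by linarith) hT.le)
          rw [h2] at h1
          have h3 := mul_le_mul_of_nonneg_left h1 (hk_pos μ).le
          simp only [hgB_def, hf_def, Set.indicator_of_mem hμ, hq_def]
          have h4 : k μ * (Real.log 2 + (S - μ ^ 2 / (2 * m)) / T)
              = k μ * Real.log 2 + S / T * k μ - 1 / T * (k μ * (μ ^ 2 / (2 * m))) := by
            field_simp; ring
          linarith [h4 ▸ h3]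
        · have h2 := hL_out μ hμ
          have h3 := mul_le_mul_of_nonneg_left h2 (hk_pos μ).le
          have h5 : 0 ≤ (S / T) * k μ := mul_nonneg (by positivity) (hk_pos μ).le
          simp only [hgB_def, hf_def, Set.indicator_of_notMem hμ, mul_zero, sub_zero]
          linarith
      have hIfB : ∫ μ : ℝ, f μ ≤ ∫ μ : ℝ, gB μ :=
        integral_mono_of_nonneg (Filter.Eventually.of_forall hf_nonneg) hgB_int
          (Filter.Eventually.of_forall hfgB)
      have hIgB : ∫ μ : ℝ, gB μ
          = 2 * π * Real.log 2 + (S / T) * (2 * π)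
            - (1 / T) * ∫ μ in Set.Icc (-R) R, q μ := by
        have hint1 : Integrable (fun μ : ℝ => k μ * Real.log 2 + S / T * k μ) :=
          (hki.mul_const _).add (hki.const_mul _)
        have hint2 : Integrable (fun μ : ℝ =>
            (1 / T) * Set.indicator (Set.Icc (-R) R) q μ) := hind2.const_mul _
        simp only [hgB_def]
        rw [integral_sub hint1 hint2,
          integral_add (hki.mul_const _) (hki.const_mul _), integral_mul_const, hIk,
          MeasureTheory.integral_const_mul, hIk, MeasureTheory.integral_const_mul,
          integral_indicator measurableSet_Icc]
      -- lower bound for the subtracted integral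
      have hJ_lb : c ^ 2 / (68 * m) ≤ ∫ μ in Set.Icc (-R) R, q μ := by
        have hsub : Set.Icc (c / 4) R ⊆ Set.Icc (-R) R :=
          Set.Icc_subset_Icc (by linarith) le_rfl
        have hJ1 : ∫ μ in Set.Icc (c / 4) R, q μ ≤ ∫ μ in Set.Icc (-R) R, q μ :=
          setIntegral_mono_set hq_intOn
            (Filter.Eventually.of_forall hq_nonneg) (HasSubset.Subset.eventuallyLE hsub)
        have hq_lb : ∀ μ ∈ Set.Icc (c / 4) R, c / (17 * m) ≤ q μ := by
          intro μ hμ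
          rcases Set.mem_Icc.mp hμ with ⟨ha, hb⟩
          have hμpos : 0 < μ := lt_of_lt_of_le (by positivity) ha
          have hne : μ ^ 2 + c ^ 2 ≠ 0 := by positivity
          have hrw : q μ = (c * μ ^ 2) / (m * (μ ^ 2 + c ^ 2)) := by
            simp only [hq_def, hk_def]
            rw [div_mul_div_comm, div_eq_div_iff (by positivity) (by positivity)]
            ring
          rw [hrw, div_le_div_iff₀ (by positivity) (by positivity)]
          have h16 : c ^ 2 ≤ 16 * μ ^ 2 := by nlinarith [mul_self_nonneg (4 * μ - c)]
          have h17 : c * m * (μ ^ 2 + c ^ 2) ≤ c * m * (17 * μ ^ 2) := by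
            nlinarith [mul_pos hc hm]
          nlinarith [h17]
        have hJ2 : ∫ μ in Set.Icc (c / 4) R, (c / (17 * m) : ℝ)
            ≤ ∫ μ in Set.Icc (c / 4) R, q μ :=
          setIntegral_mono_on (integrableOn_const measure_Icc_lt_top.ne)
            (hq_cont.integrableOn_Icc) measurableSet_Icc hq_lb
        have hJ3 : ∫ μ in Set.Icc (c / 4) R, (c / (17 * m) : ℝ)
            = (R - c / 4) * (c / (17 * m)) := by
          rw [setIntegral_const, Real.volume_real_Icc_of_le (by linarith),
            smul_eq_mul]
        have hJ4 : c ^ 2 / (68 * m) ≤ (R - c / 4) * (c / (17 * m)) := by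
          have h6 : c / 4 ≤ R - c / 4 := by linarith
          have h7 : (0:ℝ) < c / (17 * m) := by positivity
          calc c ^ 2 / (68 * m) = (c / 4) * (c / (17 * m)) := by field_simp; ring
            _ ≤ (R - c / 4) * (c / (17 * m)) := mul_le_mul_of_nonneg_right h6 h7.le
        linarith
      -- combine to get a contradiction
      have hy2 : -(x₀ + h) = S - h := by rw [hS_def]; ring
      have hy3 : -(x₀ + h) = (T / (2 * π)) * ∫ μ : ℝ, f μ := by rw [hy_eq]; ring
      set J : ℝ := ∫ μ in Set.Icc (-R) R, q μ with hJ_def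
      have h8 : S - h ≤ T * Real.log 2 + S - J / (2 * π) := by
        rw [← hy2, hy3]
        calc (T / (2 * π)) * ∫ μ : ℝ, f μ
            ≤ (T / (2 * π)) * (2 * π * Real.log 2 + (S / T) * (2 * π) - (1 / T) * J) := by
              apply mul_le_mul_of_nonneg_left _ (by positivity)
              rw [hIgB] at hIfB; exact hIfB
          _ = T * Real.log 2 + S - J / (2 * π) := by field_simp
      have h9 : J ≤ 2 * π * (T * Real.log 2 + h) := by
        have h10 : J / (2 * π) ≤ T * Real.log 2 + h := by linarith
        calc J = (J / (2 * π)) * (2 * π) := by field_simp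
          _ ≤ (T * Real.log 2 + h) * (2 * π) :=
            mul_le_mul_of_nonneg_right h10 (by positivity)
          _ = 2 * π * (T * Real.log 2 + h) := by ring
      have h11 : c ^ 2 ≤ 136 * π * m * (T * Real.log 2 + h) := by
        have := le_trans hJ_lb h9
        rw [div_le_iff₀ (by positivity)] at this
        nlinarith
      have h12 : 272 * π * (T * Real.log 2 + h) * m ≤ c ^ 2 := by
        rw [yyM0] at hm0
        rw [← le_div_iff₀' (by positivity)]
        exact hm0
      nlinarith [mul_pos hπ hA, hm]
  -- Phase 2 : Gaussian domination
  have hB_pos : 0 < yyB h T := by rw [yyB]; positivity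
  have hM1 : 1 ≤ yyM h T := by
    rw [yyM]
    have h1 : (0:ℝ) ≤ yyB h T / T := by positivity
    nlinarith [Real.one_le_exp h1]
  have hb : (0:ℝ) < 1 / (4 * m * T) := by positivity
  set g2 : ℝ → ℝ := fun μ => (2 / c) * yyM h T * Real.exp (-(1 / (4 * m * T)) * μ ^ 2)
    with hg2_def
  have hg2_int : Integrable g2 := (integrable_exp_neg_mul_sq hb).const_mul _
  have hfg2 : ∀ μ : ℝ, f μ ≤ g2 μ := by
    intro μ
    have hu : (0:ℝ) ≤ μ ^ 2 / (2 * m) := by positivity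
    have hexp2 : -(1 / (4 * m * T)) * μ ^ 2 = -(μ ^ 2 / (2 * m) / (2 * T)) := by
      field_simp
      ring
    have hL_le : Real.log (1 + Real.exp (-(μ ^ 2 / (2 * m) + x₀) / T))
        ≤ yyM h T * Real.exp (-(μ ^ 2 / (2 * m) / (2 * T))) := by
      rcases le_or_gt (μ ^ 2 / (2 * m)) (2 * S) with hcs | hcs
      · have h1 := yy_log_le_max (-(μ ^ 2 / (2 * m) + x₀) / T)
        have hlog2_le : Real.log 2 ≤ 1 := by
          have := Real.log_le_sub_one_of_pos (show (0:ℝ) < 2 by norm_num)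
          linarith
        have hST : S / T ≤ yyB h T / T := by gcongr
        have h2 : Real.log (1 + Real.exp (-(μ ^ 2 / (2 * m) + x₀) / T))
            ≤ 1 + yyB h T / T := by
          have := hmax_le μ
          linarith
        have h3 : (0:ℝ) ≤ yyB h T / T - μ ^ 2 / (2 * m) / (2 * T) := by
          have hμ4 : μ ^ 2 ≤ 4 * m * S := by
            rw [div_le_iff₀ (by positivity)] at hcs; linarith
          have h4 : μ ^ 2 / (2 * m) / (2 * T) ≤ S / T := by
            rw [div_div, div_le_div_iff₀ (by positivity) (by positivity)]
            nlinarith [mul_le_mul_of_nonneg_right hμ4 hT.le]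
          linarith
        have h5 : 1 ≤ Real.exp (yyB h T / T) * Real.exp (-(μ ^ 2 / (2 * m) / (2 * T))) := by
          rw [← Real.exp_add]
          apply Real.one_le_exp
          linarith
        calc Real.log (1 + Real.exp (-(μ ^ 2 / (2 * m) + x₀) / T)) ≤ 1 + yyB h T / T := h2
          _ ≤ (1 + yyB h T / T) *
              (Real.exp (yyB h T / T) * Real.exp (-(μ ^ 2 / (2 * m) / (2 * T)))) := by
            have h6 : (0:ℝ) ≤ 1 + yyB h T / T := by positivity
            nlinarith [mul_le_mul_of_nonneg_left h5 h6]
          _ = yyM h T * Real.exp (-(μ ^ 2 / (2 * m) / (2 * T))) := by rw [yyM]; ring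
      · have h1 := yy_log_le_exp (-(μ ^ 2 / (2 * m) + x₀) / T)
        have h2 : -(μ ^ 2 / (2 * m) + x₀) / T ≤ -(μ ^ 2 / (2 * m) / (2 * T)) := by
          rw [hexp_eq]
          rw [div_le_iff₀ (by positivity : (0:ℝ) < T)]
          have : -(μ ^ 2 / (2 * m) / (2 * T)) * T = -(μ ^ 2 / (2 * m)) / 2 := by
            field_simp
          rw [this]
          linarith
        calc Real.log (1 + Real.exp (-(μ ^ 2 / (2 * m) + x₀) / T))
            ≤ Real.exp (-(μ ^ 2 / (2 * m) + x₀) / T) := h1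
          _ ≤ Real.exp (-(μ ^ 2 / (2 * m) / (2 * T))) := Real.exp_le_exp.mpr h2
          _ ≤ yyM h T * Real.exp (-(μ ^ 2 / (2 * m) / (2 * T))) := by
            nlinarith [Real.exp_pos (-(μ ^ 2 / (2 * m) / (2 * T)))]
    have hL_nonneg : 0 ≤ Real.log (1 + Real.exp (-(μ ^ 2 / (2 * m) + x₀) / T)) :=
      Real.log_nonneg (by nlinarith [Real.exp_pos (-(μ ^ 2 / (2 * m) + x₀) / T)])
    calc f μ ≤ (2 / c) * (yyM h T * Real.exp (-(μ ^ 2 / (2 * m) / (2 * T)))) :=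
          mul_le_mul (hk_le μ) hL_le hL_nonneg (by positivity)
      _ = g2 μ := by rw [hg2_def]; simp only []; rw [hexp2]; ring
  have hIf2 : ∫ μ : ℝ, f μ ≤ ∫ μ : ℝ, g2 μ :=
    integral_mono_of_nonneg (Filter.Eventually.of_forall hf_nonneg) hg2_int
      (Filter.Eventually.of_forall hfg2)
  have hIg2 : ∫ μ : ℝ, g2 μ
      = (2 / c) * yyM h T * (Real.sqrt (4 * T * π) * Real.sqrt m) := by
    have h1 : ∫ μ : ℝ, g2 μ
        = (2 / c) * yyM h T * ∫ μ : ℝ, Real.exp (-(1 / (4 * m * T)) * μ ^ 2) := by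
      simp only [hg2_def]
      rw [MeasureTheory.integral_const_mul]
    rw [h1, integral_gaussian]
    congr 1
    have h2 : π / (1 / (4 * m * T)) = (4 * T * π) * m := by field_simp
    rw [h2, Real.sqrt_mul (by positivity)]
  have hfinal : -(x₀ + h) ≤ yyC c h T * Real.sqrt m := by
    have h5 : -(x₀ + h) = (T / (2 * π)) * ∫ μ : ℝ, f μ := by rw [hy_eq]; ring
    rw [h5]
    calc (T / (2 * π)) * ∫ μ : ℝ, f μ
        ≤ (T / (2 * π)) * ((2 / c) * yyM h T * (Real.sqrt (4 * T * π) * Real.sqrt m)) := by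
          apply mul_le_mul_of_nonneg_left _ (by positivity)
          rw [← hIg2]; exact hIf2
      _ = yyC c h T * Real.sqrt m := by rw [yyC]; ring
  exact hfinal

theorem yang_yang_small_mass (c h T : ℝ) (hc : 0 < c) (hh : 0 < h) (hT : 0 < T) :
    ∃ C > 0, ∃ m₀ > 0, ∀ m : ℝ, 0 < m → m ≤ m₀ →
      ∀ x₀ : ℝ, ∀ ε : ℝ → ℝ,
        (x₀ = -h - (T / (2 * Real.pi)) * ∫ μ : ℝ, (2 * c / (μ ^ 2 + c ^ 2)) *
            Real.log (1 + Real.exp (-(μ ^ 2 / (2 * m) + x₀) / T))) →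
        (∀ l : ℝ, ε l ≤ l ^ 2 / (2 * m) - h ∧ l ^ 2 / (2 * m) + x₀ ≤ ε l) →
        |x₀ + h| ≤ C * Real.sqrt m ∧
          ∀ l : ℝ, |ε l - (l ^ 2 / (2 * m) - h)| ≤ C * Real.sqrt m := by
  have hπ : (0:ℝ) < π := Real.pi_pos
  have hlog2 : (0:ℝ) < Real.log 2 := Real.log_pos (by norm_num)
  have hB : 0 < yyB h T := by
    rw [yyB]; have := mul_pos hT hlog2; linarith
  have hM : 0 < yyM h T := by
    rw [yyM]
    have hq : 0 < yyB h T / T := div_pos hB hT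
    exact mul_pos (by linarith) (Real.exp_pos _)
  have hC : 0 < yyC c h T := by
    rw [yyC]
    exact mul_pos (by positivity)
      (mul_pos (mul_pos (by positivity) hM) (Real.sqrt_pos.mpr (by positivity)))
  have hM0 : 0 < yyM0 c h T := by
    rw [yyM0]
    have := mul_pos hT hlog2
    positivity
  refine ⟨yyC c h T + 1, by linarith, yyM0 c h T, hM0, ?_⟩
  intro m hm hm0 x₀ ε heq hε
  obtain ⟨h1, h2⟩ := yy_main c h T hc hh hT m hm hm0 x₀ heq
  have hsm : (0:ℝ) ≤ Real.sqrt m := Real.sqrt_nonneg m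
  constructor
  · rw [abs_of_nonpos h1]
    nlinarith
  · intro l
    obtain ⟨ha, hb⟩ := hε l
    rw [abs_le]
    constructor
    · nlinarith
    · nlinarith [mul_nonneg hC.le hsm]
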